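/- A map f : X → Y between topological spaces is scatteredly continuous if and only if there exist an ordinal β and a family (X_α)_{α ≤ β} of subsets of X such that: X_0 = X; X_β = ∅; X_{α'} ⊆ X_α whenever α ≤ α' ≤ β; X_α = ⋂_{γ < α} X_γ for every limit ordinal α ≤ β; X_{α+1} ≠ X_α for every α < β; and for every α < β the set D(f|X_α) of points of X_α at which the restriction f|X_α (with the subspace topology on X_α) is discontinuous is contained in X_{α+1}. -/

import Mathlib

open Set Topology

universe u v

/-- A map `f : X → Y` is *scatteredly continuous* if for every non-empty subset `A ⊆ X`
the restriction `f|A` has a point of continuity. -/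
def ScatteredlyContinuous {X Y : Type*} [TopologicalSpace X] [TopologicalSpace Y]
    (f : X → Y) : Prop :=
  ∀ A : Set X, A.Nonempty → ∃ a ∈ A, ContinuousWithinAt f A a

section Aux

variable {X : Type u} {Y : Type v} [TopologicalSpace X] [TopologicalSpace Y]

/-- The set of discontinuity points of the restriction of `f` to `A`. -/
def DsetSC (f : X → Y) (A : Set X) : Set X := {x ∈ A | ¬ ContinuousWithinAt f A x}

theorem DsetSC_subset (f : X → Y) (A : Set X) : DsetSC f A ⊆ A := fun _ hx => hx.1

/-- The transfinite sequence of iterated discontinuity sets. -/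
noncomputable def seqSC (f : X → Y) (α : Ordinal.{u}) : Set X :=
  ⋂ γ, ⋂ _ : γ < α, DsetSC f (seqSC f γ)
termination_by α

theorem seqSC_eq (f : X → Y) (α : Ordinal.{u}) :
    seqSC f α = ⋂ γ, ⋂ _ : γ < α, DsetSC f (seqSC f γ) := by
  rw [seqSC]

theorem seqSC_zero (f : X → Y) : seqSC f 0 = Set.univ := by
  rw [seqSC_eq]
  simp

theorem seqSC_anti (f : X → Y) {γ α : Ordinal.{u}} (h : γ ≤ α) :
    seqSC f α ⊆ seqSC f γ := by
  rw [seqSC_eq f α, seqSC_eq f γ]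
  exact fun x hx => mem_iInter₂.2 fun δ hδ => mem_iInter₂.1 hx δ (hδ.trans_le h)

theorem seqSC_succ (f : X → Y) (α : Ordinal.{u}) :
    seqSC f (α + 1) = DsetSC f (seqSC f α) := by
  apply Set.Subset.antisymm
  · rw [seqSC_eq f (α + 1)]
    exact fun x hx => mem_iInter₂.1 hx α (lt_add_one α)
  · intro x hx
    rw [seqSC_eq f (α + 1)]
    refine mem_iInter₂.2 fun δ hδ => ?_
    rcases lt_or_eq_of_le (Order.lt_add_one_iff.mp hδ) with h | h
    · have : x ∈ seqSC f α := DsetSC_subset f _ hx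
      rw [seqSC_eq f α] at this
      exact mem_iInter₂.1 this δ h
    · rwa [h]

theorem seqSC_limit (f : X → Y) {α : Ordinal.{u}} (hα : Order.IsSuccLimit α) :
    seqSC f α = ⋂ γ < α, seqSC f γ := by
  apply Set.Subset.antisymm
  · exact fun x hx => mem_iInter₂.2 fun γ hγ => seqSC_anti f hγ.le hx
  · intro x hx
    rw [seqSC_eq f α]
    refine mem_iInter₂.2 fun γ hγ => ?_
    have h1 : γ + 1 < α := hα.succ_lt hγ
    have := mem_iInter₂.1 hx (γ + 1) h1
    rw [seqSC_succ] at this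
    exact this

theorem seqSC_ssubset (f : X → Y) (hf : ScatteredlyContinuous f) {α : Ordinal.{u}}
    (hne : (seqSC f α).Nonempty) : seqSC f (α + 1) ⊂ seqSC f α := by
  rw [seqSC_succ]
  refine ⟨DsetSC_subset f _, fun hsub => ?_⟩
  obtain ⟨a, ha, hc⟩ := hf _ hne
  exact (hsub ha).2 hc

theorem seqSC_exists_empty (f : X → Y) (hf : ScatteredlyContinuous f) :
    ∃ α : Ordinal.{u}, seqSC f α = ∅ := by
  by_contra h
  push_neg at h
  have hne : ∀ α, (seqSC f α).Nonempty := h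
  have hinj : Function.Injective (seqSC f) := by
    intro a b hab
    by_contra hne'
    wlog hlt : a < b generalizing a b
    · exact this hab.symm (Ne.symm hne') (lt_of_le_of_ne (not_lt.mp hlt) (Ne.symm hne'))
    have h1 : seqSC f b ⊆ seqSC f (a + 1) := seqSC_anti f (Order.add_one_le_iff.mpr hlt)
    have h2 := seqSC_ssubset f hf (hne a)
    exact h2.2 (hab ▸ h1)
  exact not_injective_of_ordinal (seqSC f) hinj

end Aux

theorem scatteredlyContinuous_iff_vanishing_series
    {X : Type u} {Y : Type v} [TopologicalSpace X] [TopologicalSpace Y] (f : X → Y) :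
    ScatteredlyContinuous f ↔
      ∃ (β : Ordinal.{u}) (Xs : Ordinal.{u} → Set X),
        Xs 0 = Set.univ ∧
        Xs β = ∅ ∧
        (∀ α α' : Ordinal.{u}, α ≤ α' → α' ≤ β → Xs α' ⊆ Xs α) ∧
        (∀ α : Ordinal.{u}, α ≤ β → Order.IsSuccLimit α → Xs α = ⋂ γ < α, Xs γ) ∧
        (∀ α : Ordinal.{u}, α < β → Xs (α + 1) ≠ Xs α) ∧
        (∀ α : Ordinal.{u}, α < β →
          {x ∈ Xs α | ¬ ContinuousWithinAt f (Xs α) x} ⊆ Xs (α + 1)) := by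
  constructor
  · intro hf
    set S : Set Ordinal.{u} := {α | seqSC f α = ∅} with hS
    have hSne : S.Nonempty := seqSC_exists_empty f hf
    set β := sInf S with hβ
    have hβmem : β ∈ S := csInf_mem hSne
    have hmin : ∀ α, α < β → seqSC f α ≠ ∅ := fun α hα =>
      notMem_of_lt_csInf' (s := S) hα
    refine ⟨β, seqSC f, seqSC_zero f, hβmem, fun α α' h _ => seqSC_anti f h,
      fun α _ hα => seqSC_limit f hα, fun α hα => ?_, fun α hα => ?_⟩
    · intro heq
      have hne : (seqSC f α).Nonempty := nonempty_iff_ne_empty.2 (hmin α hα)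
      exact (seqSC_ssubset f hf hne).2 (heq ▸ Set.Subset.refl _)
    · rw [seqSC_succ]
      exact Set.Subset.refl _
  · rintro ⟨β, Xs, h0, hβ, hanti, hlim, _, hD⟩
    intro A hA
    set S : Set Ordinal.{u} := {α | ¬ A ⊆ Xs α} with hS
    have hβS : β ∈ S := by
      intro h
      obtain ⟨a, ha⟩ := hA
      exact absurd (h ha) (by rw [hβ]; exact id)
    have hSne : S.Nonempty := ⟨β, hβS⟩
    set α := sInf S with hα
    have hαmem : α ∈ S := csInf_mem hSne
    have hαβ : α ≤ β := csInf_le' hβS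
    have hmin : ∀ γ, γ < α → A ⊆ Xs γ := fun γ hγ =>
      not_not.mp (notMem_of_lt_csInf' (s := S) hγ)
    rcases Ordinal.zero_or_succ_or_isSuccLimit α with h0' | ⟨γ, hγ⟩ | hl
    · exact absurd (h0 ▸ Set.subset_univ A) (h0' ▸ hαmem)
    · rw [← Ordinal.add_one_eq_succ, eq_comm] at hγ
      have hγα : γ < α := by rw [hγ]; exact lt_add_one γ
      have hAγ : A ⊆ Xs γ := hmin γ hγα
      have hγβ : γ < β := hγα.trans_le hαβ
      have hnotsub : ¬ A ⊆ Xs (γ + 1) := hγ ▸ hαmem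
      obtain ⟨a, haA, haN⟩ := not_subset.mp hnotsub
      have haγ : a ∈ Xs γ := hAγ haA
      have hcont : ContinuousWithinAt f (Xs γ) a := by
        by_contra hc
        exact haN (hD γ hγβ ⟨haγ, hc⟩)
      exact ⟨a, haA, hcont.mono hAγ⟩
    · have : A ⊆ Xs α := by
        rw [hlim α hαβ hl]
        exact fun a ha => mem_iInter₂.2 fun γ hγ => hmin γ hγ ha
      exact absurd this hαmem
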